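/- Let F be a field, A_n = F[x₁,…,x_n, y₁,…,y_n], and α_{ij} = x_i y_j − x_j y_i for i < j. The set B_n of products α_{i₁j₁}α_{i₂j₂}⋯α_{i_r j_r} with i₁ ≤ i₂ ≤ ⋯ ≤ i_r, j₁ ≤ j₂ ≤ ⋯ ≤ j_r, and i_s < j_s for each s (together with 1 for r = 0), is linearly independent over F in A_n. -/

import Mathlib

open MvPolynomial

namespace SMaux
variable {n : ℕ} {F : Type*} [Field F]

/-- exponent of the term `x_i y_j` -/
noncomputable def mu1 (p : Fin n × Fin n) : (Fin n ⊕ Fin n) →₀ ℕ :=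
  Finsupp.single (Sum.inl p.1) 1 + Finsupp.single (Sum.inr p.2) 1

/-- exponent of the term `x_j y_i` -/
noncomputable def mu2 (p : Fin n × Fin n) : (Fin n ⊕ Fin n) →₀ ℕ :=
  Finsupp.single (Sum.inl p.2) 1 + Finsupp.single (Sum.inr p.1) 1

/-- leading (minimal-weight) exponent of a standard monomial -/
noncomputable def mexp (l : List (Fin n × Fin n)) : (Fin n ⊕ Fin n) →₀ ℕ := (l.map mu1).sum

/-- weight: sum over x-variables of index times exponent -/
noncomputable def W (d : (Fin n ⊕ Fin n) →₀ ℕ) : ℕ := ∑ i : Fin n, d (Sum.inl i) * i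

lemma W_add (a b : (Fin n ⊕ Fin n) →₀ ℕ) : W (a + b) = W a + W b := by
  simp [W, add_mul, Finset.sum_add_distrib]

lemma W_mu1 (p : Fin n × Fin n) : W (mu1 p) = p.1 := by
  simp [W, mu1, Finsupp.single_apply, Finset.sum_ite_eq]

lemma W_mu2 (p : Fin n × Fin n) : W (mu2 p) = p.2 := by
  simp [W, mu2, Finsupp.single_apply, Finset.sum_ite_eq]

noncomputable def P (l : List (Fin n × Fin n)) : MvPolynomial (Fin n ⊕ Fin n) F :=
  (l.map (fun p => X (Sum.inl p.1) * X (Sum.inr p.2) - X (Sum.inl p.2) * X (Sum.inr p.1))).prod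

lemma alpha_eq (p : Fin n × Fin n) :
    (X (Sum.inl p.1) * X (Sum.inr p.2) - X (Sum.inl p.2) * X (Sum.inr p.1) :
      MvPolynomial (Fin n ⊕ Fin n) F)
      = monomial (mu1 p) 1 - monomial (mu2 p) 1 := by
  rw [X, X, X, X, monomial_mul, monomial_mul, one_mul, mu1, mu2]

lemma coeff_alpha {p : Fin n × Fin n} {d : (Fin n ⊕ Fin n) →₀ ℕ}
    (h : coeff d (X (Sum.inl p.1) * X (Sum.inr p.2) - X (Sum.inl p.2) * X (Sum.inr p.1) :
      MvPolynomial (Fin n ⊕ Fin n) F) ≠ 0) : d = mu1 p ∨ d = mu2 p := by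
  rw [alpha_eq] at h
  simp only [coeff_sub, coeff_monomial] at h
  by_contra hc
  push_neg at hc
  simp [Ne.symm hc.1, Ne.symm hc.2] at h

lemma exists_decomp {f g : MvPolynomial (Fin n ⊕ Fin n) F} {d}
    (h : coeff d (f * g) ≠ 0) :
    ∃ d1 d2, coeff d1 f ≠ 0 ∧ coeff d2 g ≠ 0 ∧ d1 + d2 = d := by
  classical
  have hd : d ∈ (f * g).support := by rwa [mem_support_iff]
  have := support_mul f g hd
  rw [Finset.mem_add] at this
  obtain ⟨a, ha, b, hb, hab⟩ := this
  exact ⟨a, b, mem_support_iff.mp ha, mem_support_iff.mp hb, hab⟩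

/-- Key triangularity lemma: the coefficient of the leading exponent is 1, every
exponent occurring in `P l` has weight at least that of `mexp l`, and `mexp l` is
the unique exponent of minimal weight. -/
lemma key (l : List (Fin n × Fin n)) (hl : ∀ p ∈ l, p.1 < p.2) :
    coeff (mexp l) (P l : MvPolynomial (Fin n ⊕ Fin n) F) = 1 ∧
    ∀ d, coeff d (P l : MvPolynomial (Fin n ⊕ Fin n) F) ≠ 0 →
      W (mexp l) ≤ W d ∧ (W d ≤ W (mexp l) → d = mexp l) := by
  classical
  induction l with
  | nil =>
    constructor
    · simp [P, mexp]
    · intro d hd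
      simp only [P, List.map_nil, List.prod_nil, ← C_1, coeff_C, ne_eq, ite_eq_right_iff,
        one_ne_zero, not_forall] at hd
      simp [mexp, ← hd.1]
  | cons p t ih =>
    have hp : p.1 < p.2 := hl p List.mem_cons_self
    obtain ⟨ih1, ih2⟩ := ih (fun q hq => hl q (List.mem_cons_of_mem _ hq))
    have hP : (P (p :: t) : MvPolynomial (Fin n ⊕ Fin n) F)
        = (X (Sum.inl p.1) * X (Sum.inr p.2) - X (Sum.inl p.2) * X (Sum.inr p.1)) * P t := by
      simp [P]
    have hm : mexp (p :: t) = mu1 p + mexp t := by simp [mexp]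
    have part2 : ∀ d, coeff d (P (p :: t) : MvPolynomial (Fin n ⊕ Fin n) F) ≠ 0 →
        W (mexp (p :: t)) ≤ W d ∧ (W d ≤ W (mexp (p :: t)) → d = mexp (p :: t)) := by
      intro d hd
      rw [hP] at hd
      obtain ⟨d1, d2, h1, h2, hsum⟩ := exists_decomp hd
      have hWd : W d = W d1 + W d2 := by rw [← hsum, W_add]
      have hd2 := ih2 d2 h2
      have hd1 : W (mu1 p) ≤ W d1 := by
        rcases coeff_alpha h1 with h | h
        · rw [h]
        · rw [h, W_mu1, W_mu2]; exact hp.le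
      have hWm : W (mexp (p :: t)) = W (mu1 p) + W (mexp t) := by rw [hm, W_add]
      constructor
      · rw [hWd, hWm]; exact Nat.add_le_add hd1 hd2.1
      · intro hle
        rw [hWd, hWm] at hle
        have e1 : W d1 = W (mu1 p) := le_antisymm (by omega) hd1
        have e2 : W d2 ≤ W (mexp t) := by omega
        have hd1e : d1 = mu1 p := by
          rcases coeff_alpha h1 with h | h
          · exact h
          · exfalso; rw [h, W_mu2, W_mu1] at e1
            exact absurd (Fin.ext e1) hp.ne'
        rw [hm, ← hsum, hd1e, hd2.2 e2]
    refine ⟨?_, part2⟩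
    rw [hP, alpha_eq, sub_mul, coeff_sub, hm]
    have c1 : coeff (mu1 p + mexp t) ((monomial (mu1 p) (1:F)) * P t) = 1 := by
      rw [coeff_monomial_mul, one_mul, ih1]
    have c2 : coeff (mu1 p + mexp t) ((monomial (mu2 p) (1:F)) * P t) = 0 := by
      by_contra h
      obtain ⟨d1, d2, h1, h2, hsum⟩ := exists_decomp h
      have hd1 : d1 = mu2 p := by
        by_contra hne
        rw [coeff_monomial, if_neg (Ne.symm hne)] at h1
        exact h1 rfl
      have := (ih2 d2 h2).1
      have hW := congrArg W hsum
      rw [W_add, hd1, W_mu2, W_add, W_mu1] at hW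
      have : (p.2 : ℕ) < p.2 := by
        have hlt : (p.1 : ℕ) < p.2 := hp
        omega
      exact lt_irrefl _ this
    rw [c1, c2, sub_zero]

lemma mexp_inl (l : List (Fin n × Fin n)) (k : Fin n) :
    mexp l (Sum.inl k) = (l.map Prod.fst).count k := by
  induction l with
  | nil => simp [mexp]
  | cons p t ih =>
    have hmu : mu1 p (Sum.inl k) = if p.1 = k then 1 else 0 := by
      simp [mu1, Finsupp.single_apply]
    simp only [mexp, List.map_cons, List.sum_cons, Finsupp.add_apply] at *
    rw [ih, hmu, List.count_cons]
    by_cases h : p.1 = k <;> simp [h, Nat.add_comm]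

lemma mexp_inr (l : List (Fin n × Fin n)) (k : Fin n) :
    mexp l (Sum.inr k) = (l.map Prod.snd).count k := by
  induction l with
  | nil => simp [mexp]
  | cons p t ih =>
    have hmu : mu1 p (Sum.inr k) = if p.2 = k then 1 else 0 := by
      simp [mu1, Finsupp.single_apply]
    simp only [mexp, List.map_cons, List.sum_cons, Finsupp.add_apply] at *
    rw [ih, hmu, List.count_cons]
    by_cases h : p.2 = k <;> simp [h, Nat.add_comm]

lemma zip_fst_snd (l : List (Fin n × Fin n)) :
    List.zip (l.map Prod.fst) (l.map Prod.snd) = l := by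
  induction l with
  | nil => rfl
  | cons p t ih => simp [ih]

lemma mexp_inj {l l' : List (Fin n × Fin n)}
    (h1 : (l.map Prod.fst).Chain' (· ≤ ·)) (h2 : (l.map Prod.snd).Chain' (· ≤ ·))
    (h1' : (l'.map Prod.fst).Chain' (· ≤ ·)) (h2' : (l'.map Prod.snd).Chain' (· ≤ ·))
    (he : mexp l = mexp l') : l = l' := by
  have pf : List.Perm (l.map Prod.fst) (l'.map Prod.fst) := by
    rw [List.perm_iff_count]
    intro a
    rw [← mexp_inl, ← mexp_inl, he]
  have ps : List.Perm (l.map Prod.snd) (l'.map Prod.snd) := by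
    rw [List.perm_iff_count]
    intro a
    rw [← mexp_inr, ← mexp_inr, he]
  have ef : l.map Prod.fst = l'.map Prod.fst :=
    List.Perm.eq_of_pairwise' (List.isChain_iff_pairwise.mp h1) (List.isChain_iff_pairwise.mp h1') pf
  have es : l.map Prod.snd = l'.map Prod.snd :=
    List.Perm.eq_of_pairwise' (List.isChain_iff_pairwise.mp h2) (List.isChain_iff_pairwise.mp h2') ps
  rw [← zip_fst_snd l, ← zip_fst_snd l', ef, es]

end SMaux

/-- A list of index pairs [(i₁,j₁),…,(i_r,j_r)] is standard if i₁ ≤ ⋯ ≤ i_r,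
j₁ ≤ ⋯ ≤ j_r, and i_s < j_s for each s. -/
def IsStandard {n : ℕ} (l : List (Fin n × Fin n)) : Prop :=
  (∀ p ∈ l, p.1 < p.2) ∧ (l.map Prod.fst).Chain' (· ≤ ·) ∧ (l.map Prod.snd).Chain' (· ≤ ·)

/-- The standard monomials α_{i₁j₁}⋯α_{i_rj_r} (including 1 for r = 0)
in the Plücker coordinates α_{ij} = x_i y_j − x_j y_i are linearly independent over F. -/
theorem standard_monomials_linearIndependent (F : Type*) [Field F] (n : ℕ)
    (α : Fin n → Fin n → MvPolynomial (Fin n ⊕ Fin n) F)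
    (hα : ∀ i j, α i j = X (Sum.inl i) * X (Sum.inr j) - X (Sum.inl j) * X (Sum.inr i)) :
    LinearIndependent F (fun l : {l : List (Fin n × Fin n) // IsStandard l} =>
      (l.1.map (fun p => α p.1 p.2)).prod) := by
  classical
  have hfun : (fun l : {l : List (Fin n × Fin n) // IsStandard l} =>
      (l.1.map (fun p => α p.1 p.2)).prod) = fun l => SMaux.P l.1 := by
    funext l
    simp only [SMaux.P]
    congr 1
    apply List.map_congr_left
    intro p _
    rw [hα]
  rw [hfun, linearIndependent_iff']
  intro s g hsum l hls
  by_contra hgl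
  set T := s.filter (fun l' => g l' ≠ 0) with hT
  have hTne : T.Nonempty := ⟨l, Finset.mem_filter.mpr ⟨hls, hgl⟩⟩
  obtain ⟨l0, hl0T, hmin⟩ := T.exists_min_image (fun l' => SMaux.W (SMaux.mexp l'.1)) hTne
  obtain ⟨hl0s, hg0⟩ := Finset.mem_filter.mp hl0T
  have hc : coeff (SMaux.mexp l0.1) (∑ i ∈ s, g i • (SMaux.P i.1 : MvPolynomial (Fin n ⊕ Fin n) F)) = 0 := by
    rw [hsum]; simp
  rw [coeff_sum] at hc
  have hterm : ∀ l' ∈ s, l' ≠ l0 →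
      coeff (SMaux.mexp l0.1) (g l' • (SMaux.P l'.1 : MvPolynomial (Fin n ⊕ Fin n) F)) = 0 := by
    intro l' hl's hne
    rcases eq_or_ne (g l') 0 with h0 | h0
    · simp [h0]
    have hl'T : l' ∈ T := Finset.mem_filter.mpr ⟨hl's, h0⟩
    have hWle : SMaux.W (SMaux.mexp l0.1) ≤ SMaux.W (SMaux.mexp l'.1) := hmin l' hl'T
    rw [coeff_smul, smul_eq_mul]
    rcases eq_or_ne (coeff (SMaux.mexp l0.1) (SMaux.P l'.1 :
        MvPolynomial (Fin n ⊕ Fin n) F)) 0 with hz | hz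
    · rw [hz, mul_zero]
    exfalso
    obtain ⟨_, hkey2⟩ := SMaux.key (F := F) l'.1 l'.2.1
    obtain ⟨hge, heq⟩ := hkey2 _ hz
    have hme : SMaux.mexp l0.1 = SMaux.mexp l'.1 := heq hWle
    have : l0.1 = l'.1 :=
      SMaux.mexp_inj l0.2.2.1 l0.2.2.2 l'.2.2.1 l'.2.2.2 hme
    exact hne (Subtype.ext this.symm)
  rw [Finset.sum_eq_single_of_mem l0 hl0s hterm] at hc
  obtain ⟨hkey1, _⟩ := SMaux.key (F := F) l0.1 l0.2.1
  rw [coeff_smul, smul_eq_mul, hkey1, mul_one] at hc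
  exact hg0 hc
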